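/- Let F = (f_1,…,f_N) be a uniform Parseval frame for an n-dimensional complex inner product space H (so ∑_{i=1}^N |⟨x,f_i⟩|² = ‖x‖² for all x and ‖f_i‖² = n/N for all i), and let p > 1. Then for every dual frame G = (g_1,…,g_N) of F, the 1-erasure numerical-radius average error satisfies AE_N^{(1),p}(F,G) = ((1/N)∑_{i=1}^N ((|⟨f_i,g_i⟩| + ‖f_i‖·‖g_i‖)/2)^p)^{1/p} ≥ n/N, and equality holds if and only if g_i = f_i for all i. In particular, the canonical dual F is the unique 1-erasure numerically optimal dual of F, and AE_N^{(1),p}(F) = n/N. -/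

import Mathlib

open scoped ComplexInnerProductSpace

/-- Let `F` be a uniform Parseval frame for an `n`-dimensional
complex inner product space `H` (so `∑ i, |⟨x, f i⟩|² = ‖x‖²` and `‖f i‖² = n/N`),
and let `p > 1`.  Then for every dual frame `G` of `F`, the `1`-erasure
numerical-radius average error
`AE_N^{(1),p}(F,G) = ((1/N) ∑ i, ((|⟨f i, g i⟩| + ‖f i‖·‖g i‖)/2)^p)^(1/p)` is at
least `n/N`, with equality iff `g i = f i` for all `i`.  In particular the
canonical dual `F` is the unique `1`-erasure numerically optimal dual and the
optimal value is `n/N`. -/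
theorem stmt_11 {H : Type*} [NormedAddCommGroup H] [InnerProductSpace ℂ H]
    [FiniteDimensional ℂ H] (n N : ℕ) (hn : Module.finrank ℂ H = n)
    (f : Fin N → H)
    (hParseval : ∀ x : H, ∑ i, ‖⟪f i, x⟫‖ ^ 2 = ‖x‖ ^ 2)
    (huniform : ∀ i, ‖f i‖ ^ 2 = (n : ℝ) / N)
    (p : ℝ) (hp : 1 < p)
    (g : Fin N → H)
    (hdual : ∀ x : H, x = ∑ i, ⟪f i, x⟫ • g i) :
    (n : ℝ) / N ≤
        ((1 / (N : ℝ)) *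
          ∑ i, ((‖⟪g i, f i⟫‖ + ‖f i‖ * ‖g i‖) / 2) ^ p) ^ (1 / p) ∧
      (((1 / (N : ℝ)) *
          ∑ i, ((‖⟪g i, f i⟫‖ + ‖f i‖ * ‖g i‖) / 2) ^ p) ^ (1 / p) = (n : ℝ) / N ↔
        ∀ i, g i = f i) := by
  have hp0 : (0:ℝ) < p := lt_trans one_pos hp
  have hp1 : p ≠ 0 := ne_of_gt hp0
  have hp1' : 1/p ≠ 0 := by positivity
  rcases Nat.eq_zero_or_pos N with hN | hN
  · subst hN
    have hzero : ∀ x : H, x = 0 := fun x => by simpa using hdual x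
    have hn0 : n = 0 := by
      rw [← hn]; exact finrank_zero_iff_forall_zero.2 hzero
    subst hn0
    simp [Real.zero_rpow hp1', Real.zero_rpow (inv_ne_zero hp1)]
  rcases Nat.eq_zero_or_pos n with hn0 | hn0
  · subst hn0
    have hsub : Subsingleton H := Module.finrank_zero_iff.1 hn
    have hf0 : ∀ i, f i = 0 := fun i => Subsingleton.elim _ _
    have hg0 : ∀ i, g i = 0 := fun i => Subsingleton.elim _ _
    simp [hf0, hg0, Real.zero_rpow hp1, Real.zero_rpow hp1',
      Real.zero_rpow (inv_ne_zero hp1)]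
  -- main case
  have hN' : (0:ℝ) < N := by exact_mod_cast hN
  have hNne : (N:ℝ) ≠ 0 := ne_of_gt hN'
  set a : Fin N → ℝ := fun i => (‖⟪g i, f i⟫‖ + ‖f i‖ * ‖g i‖) / 2 with ha_def
  have hCS : ∀ i, ‖⟪g i, f i⟫‖ ≤ ‖f i‖ * ‖g i‖ := fun i => by
    rw [mul_comm]; exact norm_inner_le_norm _ _
  have hza : ∀ i, ‖⟪f i, g i⟫‖ ≤ a i := fun i => by
    simp only [ha_def]
    rw [norm_inner_symm]
    linarith [hCS i]
  have ha_nn : ∀ i, 0 ≤ a i := fun i => le_trans (norm_nonneg _) (hza i)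
  -- trace identity
  set b := stdOrthonormalBasis ℂ H with hb
  have htrace : ∑ i, ⟪f i, g i⟫ = (n : ℂ) := by
    calc ∑ i, ⟪f i, g i⟫
        = ∑ i, ∑ j, ⟪f i, b j⟫ * ⟪b j, g i⟫ :=
          Finset.sum_congr rfl fun i _ => (b.sum_inner_mul_inner (f i) (g i)).symm
      _ = ∑ j, ∑ i, ⟪f i, b j⟫ * ⟪b j, g i⟫ := Finset.sum_comm
      _ = ∑ j, ⟪b j, ∑ i, ⟪f i, b j⟫ • g i⟫ := by
          refine Finset.sum_congr rfl fun j _ => ?_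
          rw [inner_sum]
          exact Finset.sum_congr rfl fun i _ => (inner_smul_right _ _ _).symm
      _ = ∑ j, ⟪b j, b j⟫ := by
          refine Finset.sum_congr rfl fun j _ => ?_
          rw [← hdual (b j)]
      _ = (n : ℂ) := by
          have h1 : ∀ j, ⟪b j, b j⟫ = (1:ℂ) := fun j => by
            rw [inner_self_eq_norm_sq_to_K, b.orthonormal.1 j]; norm_num
          simp [h1, hn]
  have hzsum : (n:ℝ) ≤ ∑ i, ‖⟪f i, g i⟫‖ := by
    calc (n:ℝ) = ‖(n:ℂ)‖ := by simp
      _ = ‖∑ i, ⟪f i, g i⟫‖ := by rw [htrace]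
      _ ≤ ∑ i, ‖⟪f i, g i⟫‖ := norm_sum_le _ _
  have hsum : (n:ℝ) ≤ ∑ i, a i := le_trans hzsum (Finset.sum_le_sum fun i _ => hza i)
  have hw : ∑ _i : Fin N, (N:ℝ)⁻¹ = 1 := by
    simp [Finset.sum_const, Finset.card_univ, mul_inv_cancel₀ hNne]
  have hsmul : ∀ (c : Fin N → ℝ), ∑ i, (N:ℝ)⁻¹ • c i = (1/N) * ∑ i, c i := fun c => by
    simp only [smul_eq_mul, ← Finset.mul_sum, one_div]
  have hJle : (∑ i, (N:ℝ)⁻¹ • a i) ^ p ≤ ∑ i, (N:ℝ)⁻¹ • (a i ^ p) :=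
    (strictConvexOn_rpow hp).convexOn.map_sum_le (fun i _ => by positivity) hw
      (fun i _ => Set.mem_Ici.mpr (ha_nn i))
  have hJ : ((1/(N:ℝ)) * ∑ i, a i) ^ p ≤ (1/(N:ℝ)) * ∑ i, a i ^ p := by
    rw [← hsmul a, ← hsmul (fun i => a i ^ p)]; exact hJle
  have hmean : (n:ℝ)/N ≤ (1/(N:ℝ)) * ∑ i, a i := by
    have h0 : (n:ℝ)/N = (1/(N:ℝ)) * n := by ring
    rw [h0]
    exact mul_le_mul_of_nonneg_left hsum (by positivity)
  have hmean_nn : 0 ≤ (1/(N:ℝ)) * ∑ i, a i := le_trans (by positivity) hmean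
  have hSnn : 0 ≤ (1/(N:ℝ)) * ∑ i, a i ^ p :=
    mul_nonneg (by positivity) (Finset.sum_nonneg fun i _ => Real.rpow_nonneg (ha_nn i) p)
  have hchain : ((n:ℝ)/N) ^ p ≤ (1/(N:ℝ)) * ∑ i, a i ^ p :=
    le_trans (Real.rpow_le_rpow (by positivity) hmean hp0.le) hJ
  have hgoal1 : (n:ℝ)/N ≤ ((1/(N:ℝ)) * ∑ i, a i ^ p) ^ (1/p) := by
    calc (n:ℝ)/N = (((n:ℝ)/N) ^ p) ^ (1/p) := by
          rw [one_div, Real.rpow_rpow_inv (by positivity) hp1]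
      _ ≤ ((1/(N:ℝ)) * ∑ i, a i ^ p) ^ (1/p) :=
          Real.rpow_le_rpow (by positivity) hchain (by positivity)
  refine ⟨hgoal1, ?_, ?_⟩
  · -- equality implies g = f
    intro heq
    have heq' : ((1/(N:ℝ)) * ∑ i, a i ^ p) ^ (1/p) = (n:ℝ)/N := heq
    have hS : (1/(N:ℝ)) * ∑ i, a i ^ p = ((n:ℝ)/N) ^ p := by
      have h5 : (((1/(N:ℝ)) * ∑ i, a i ^ p)^(1/p))^p = ((n:ℝ)/N)^p := by rw [heq']
      rwa [one_div p, Real.rpow_inv_rpow hSnn hp1] at h5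
    have h1 : ((1/(N:ℝ)) * ∑ i, a i)^p = ((n:ℝ)/N)^p :=
      le_antisymm (hJ.trans hS.le) (Real.rpow_le_rpow (by positivity) hmean hp0.le)
    have hmeq : (1/(N:ℝ)) * ∑ i, a i = (n:ℝ)/N := by
      have h6 : (((1/(N:ℝ)) * ∑ i, a i)^p)^p⁻¹ = (((n:ℝ)/N)^p)^p⁻¹ := by rw [h1]
      rwa [Real.rpow_rpow_inv hmean_nn hp1,
        Real.rpow_rpow_inv (by positivity : (0:ℝ) ≤ (n:ℝ)/N) hp1] at h6
    have hsumeq : ∑ i, a i = (n:ℝ) := by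
      field_simp at hmeq
      linarith [hmeq]
    have haconst : ∀ j, a j = (n:ℝ)/N := by
      have hiff := (strictConvexOn_rpow hp).map_sum_eq_iff
        (w := fun _ : Fin N => (N:ℝ)⁻¹) (p := a)
        (fun i _ => by positivity) hw (fun i _ => Set.mem_Ici.mpr (ha_nn i))
      have heqJ : (∑ i, (N:ℝ)⁻¹ • a i)^p = ∑ i, (N:ℝ)⁻¹ • (a i ^ p) := by
        rw [hsmul a, hsmul (fun i => a i ^ p), h1, hS]
      intro j
      have h7 := (hiff.1 heqJ) j (Finset.mem_univ j)
      rw [h7, hsmul a, hmeq]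
    have hz_eq_a : ∀ i, ‖⟪f i, g i⟫‖ = a i := by
      have h2 : ∑ i, ‖⟪f i, g i⟫‖ = ∑ i, a i :=
        le_antisymm (Finset.sum_le_sum fun i _ => hza i) (hsumeq ▸ hzsum)
      exact fun i => (Finset.sum_eq_sum_iff_of_le (fun i _ => hza i)).1 h2 i (Finset.mem_univ i)
    have hre : ∀ i, (⟪f i, g i⟫ : ℂ).re = ‖⟪f i, g i⟫‖ := by
      have hle' : ∀ i ∈ Finset.univ, (⟪f i, g i⟫ : ℂ).re ≤ ‖⟪f i, g i⟫‖ :=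
        fun i _ => Complex.re_le_norm _
      have hsum' : ∑ i, (⟪f i, g i⟫ : ℂ).re = ∑ i, ‖⟪f i, g i⟫‖ := by
        have h8 : (∑ i, ⟪f i, g i⟫ : ℂ).re = (n:ℝ) := by rw [htrace]; simp
        rw [Complex.re_sum] at h8
        rw [h8, Finset.sum_congr rfl fun i _ => hz_eq_a i, hsumeq]
      exact fun i => (Finset.sum_eq_sum_iff_of_le hle').1 hsum' i (Finset.mem_univ i)
    have hzne : (n:ℝ)/N ≠ 0 := by positivity
    have hz_val : ∀ i, ⟪f i, g i⟫ = (((n:ℝ)/N : ℝ) : ℂ) := fun i => by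
      have h3 : ‖⟪f i, g i⟫‖ = (n:ℝ)/N := by rw [hz_eq_a i, haconst i]
      have h0re : 0 ≤ (⟪f i, g i⟫ : ℂ).re := by rw [hre i]; exact norm_nonneg _
      have himz : (⟪f i, g i⟫ : ℂ).im = 0 := by
        apply Complex.abs_re_eq_norm.1
        rw [_root_.abs_of_nonneg h0re, hre i]
      apply Complex.ext
      · rw [hre i, h3, Complex.ofReal_re]
      · rw [himz, Complex.ofReal_im]
    intro i
    have hfne : f i ≠ 0 := by
      intro h
      have h9 := huniform i
      rw [h] at h9
      simp at h9
      exact hzne h9.symm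
    have hgne : g i ≠ 0 := by
      intro h
      have h10 := hz_val i
      rw [h, inner_zero_right] at h10
      exact hzne (by exact_mod_cast h10.symm)
    have hCSeq : ‖⟪f i, g i⟫‖ = ‖f i‖ * ‖g i‖ := by
      have h11 := hz_eq_a i
      have h12 : ‖⟪g i, f i⟫‖ = ‖⟪f i, g i⟫‖ := norm_inner_symm _ _
      simp only [ha_def] at h11
      rw [h12] at h11
      linarith
    obtain ⟨r, hr0, hgr⟩ := (norm_inner_eq_norm_iff hfne hgne).1 hCSeq
    have h13 : ⟪f i, g i⟫ = r * ((‖f i‖ : ℂ))^2 := by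
      rw [hgr, inner_smul_right, inner_self_eq_norm_sq_to_K]
      norm_cast
    have hf2 : ((‖f i‖ : ℂ))^2 = (((n:ℝ)/N : ℝ) : ℂ) := by
      rw [← Complex.ofReal_pow, huniform i]
    have hcne : (((n:ℝ)/N : ℝ) : ℂ) ≠ 0 := by
      exact_mod_cast hzne
    have hr1 : r = 1 := by
      have h14 : r * (((n:ℝ)/N : ℝ) : ℂ) = 1 * (((n:ℝ)/N : ℝ) : ℂ) := by
        rw [one_mul, ← hf2, ← h13, hz_val i, hf2]
      exact mul_right_cancel₀ hcne h14
    rw [hgr, hr1, one_smul]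
  · -- g = f implies equality
    intro hgf
    have h1 : ∀ i : Fin N, a i = (n:ℝ)/N := fun i => by
      have h2 : ‖(⟪f i, f i⟫ : ℂ)‖ = ‖f i‖^2 := by
        rw [inner_self_eq_norm_sq_to_K, norm_pow, RCLike.norm_ofReal, sq_abs]
      simp only [ha_def, hgf]
      rw [h2, ← huniform i]
      ring
    have h3 : ∑ i, a i ^ p = N * ((n:ℝ)/N)^p := by
      rw [Finset.sum_congr rfl fun i _ => by rw [h1 i]]
      simp [Finset.sum_const, Finset.card_univ]
    rw [h3, show (1/(N:ℝ)) * ((N:ℝ) * ((n:ℝ)/N)^p) = ((n:ℝ)/N)^p by field_simp,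
      one_div, Real.rpow_rpow_inv (by positivity) hp1]
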